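/- arXiv:1605.06325 — 2 statements merged into one kernel-verified Lean document; each statement's English description precedes it below -/
import Mathlib

section
/- Let V be a finite nonempty set of vertices (the current trees of the forest) and let f : V → V be a "nearest-neighbor" assignment with f(v) ≠ v for every v ∈ V. If we merge trees according to f, i.e., form the quotient of V by the equivalence relation generated by relating each v with f(v), then the number of resulting equivalence classes is at most ⌊|V| / 2⌋. In other words, one iteration of the SH (Borůvka-style) merging step decreases the number of trees by at least a factor of two. -/
attribute [local instance] Classical.propDecidable

/-- One Borůvka-style merging iteration of the SH algorithm: merging the trees of a
finite nonempty forest `V` along a fixed-point-free nearest-neighbor assignment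
`f : V → V` leaves at most `⌊|V| / 2⌋` trees, i.e. the number of trees decreases
by at least a factor of two. -/
theorem sh_merge_halves {V : Type*} [Fintype V] [Nonempty V] (f : V → V)
    (hf : ∀ v : V, f v ≠ v) :
    Fintype.card (Quotient (Relation.EqvGen.setoid (fun v w : V => w = f v))) ≤
      Fintype.card V / 2 := by
  set s := Relation.EqvGen.setoid (fun v w : V => w = f v)
  have hfiber : ∀ q : Quotient s, 2 ≤ (Finset.univ.filter (fun v : V => (Quotient.mk s v) = q)).card := by
    intro q
    obtain ⟨v, rfl⟩ := Quotient.exists_rep q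
    have hrel : ((Quotient.mk s (f v)) : Quotient s) = (Quotient.mk s v) := by
      apply Quotient.sound
      exact Relation.EqvGen.symm _ _ (Relation.EqvGen.rel v (f v) rfl)
    have h2 : ({v, f v} : Finset V) ⊆ Finset.univ.filter (fun w : V => (Quotient.mk s w) = (Quotient.mk s v)) := by
      intro w hw
      simp only [Finset.mem_insert, Finset.mem_singleton] at hw
      rcases hw with rfl | rfl
      · exact Finset.mem_filter.2 ⟨Finset.mem_univ _, rfl⟩
      · exact Finset.mem_filter.2 ⟨Finset.mem_univ _, hrel⟩
    calc 2 = ({v, f v} : Finset V).card := by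
            rw [Finset.card_insert_of_notMem (by simp [(hf v).symm, Ne]),
              Finset.card_singleton]
         _ ≤ _ := Finset.card_le_card h2
  have hsum : Fintype.card V =
      ∑ q : Quotient s, (Finset.univ.filter (fun v : V => (Quotient.mk s v) = q)).card := by
    rw [← Finset.card_univ]
    exact Finset.card_eq_sum_card_fiberwise (fun v _ => Finset.mem_univ _)
  have h := Finset.card_nsmul_le_sum Finset.univ
    (fun q : Quotient s => (Finset.univ.filter (fun v : V => (Quotient.mk s v) = q)).card) 2
    (fun q _ => hfiber q)
  simp only [smul_eq_mul, Finset.card_univ, ← hsum] at h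
  rw [Fintype.card] at h ⊢
  omega
end

section
/- Let G be a simple graph on a finite vertex type V with edge weights w : Sym2 V → ℝ that are injective on the edge set of G, and suppose every vertex of G has at least one incident edge. For each vertex v, let e(v) denote the unique minimum-weight edge of G incident to v. Then the spanning subgraph of G whose edge set is {e(v) : v ∈ V} is acyclic. -/
/-- Safety of the Borůvka step of the SH algorithm: with edge weights injective on
the edge set and every vertex incident to at least one edge, the subgraph formed by
each vertex's (unique) minimum-weight incident edge is acyclic. -/
theorem boruvka_step_acyclic {V : Type*} [Fintype V] (G : SimpleGraph V)
    (w : Sym2 V → ℝ) (hw : Set.InjOn w G.edgeSet)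
    (hdeg : ∀ v : V, ∃ u, G.Adj v u)
    (e : V → Sym2 V)
    (he : ∀ v : V, e v ∈ G.edgeSet ∧ v ∈ e v ∧
      ∀ e' ∈ G.edgeSet, v ∈ e' → w (e v) ≤ w e') :
    (SimpleGraph.fromEdgeSet (Set.range e)).IsAcyclic := by
  classical
  intro v c hc
  -- every edge of the cycle is an edge of `G` and lies in the range of `e`
  have hsub : ∀ f ∈ c.edges, f ∈ G.edgeSet ∧ f ∈ Set.range e := by
    intro f hf
    have h1 := c.edges_subset_edgeSet hf
    rw [SimpleGraph.edgeSet_fromEdgeSet] at h1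
    obtain ⟨u, hu⟩ := h1.1
    exact ⟨hu ▸ (he u).1, h1.1⟩
  -- choose a maximum-weight edge of the cycle
  have hne' : c.edges ≠ [] := by
    intro h
    have h3 := hc.three_le_length
    rw [← SimpleGraph.Walk.length_edges, h] at h3
    simp at h3
  have hne : c.edges.toFinset.Nonempty :=
    ⟨c.edges.head hne', List.mem_toFinset.mpr (List.head_mem hne')⟩
  obtain ⟨f, hfmem, hfmax⟩ := c.edges.toFinset.exists_max_image w hne
  rw [List.mem_toFinset] at hfmem
  obtain ⟨u, rfl⟩ := (hsub f hfmem).2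
  -- the vertex `u` lies on the cycle
  obtain ⟨y, hy⟩ := Sym2.mem_iff_exists.mp (he u).2.1
  have hu : u ∈ c.support := by
    apply c.fst_mem_support_of_mem_edges
    rw [← hy]; exact hfmem
  -- rotate the cycle to start at `u`
  set d := c.rotate u hu with hd_def
  have hd : d.IsCycle := hc.rotate hu
  have hrot : ∀ g, g ∈ d.edges ↔ g ∈ c.edges := fun g => (c.rotate_edges u hu).mem_iff
  -- decompose the rotated cycle as a cons
  have h3 : 3 ≤ d.length := hd.three_le_length
  rcases hdd : d with _ | ⟨hadj, p⟩
  · rw [hdd] at h3; simp at h3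
  rw [hdd] at hd hrot h3
  rename_i b
  -- the last edge of the cycle also contains `u` and differs from the first
  have hpnil : ¬ p.reverse.Nil := by
    rw [SimpleGraph.Walk.not_nil_iff_lt_length]
    simp only [SimpleGraph.Walk.length_reverse]
    have := h3
    simp only [SimpleGraph.Walk.length_cons] at this
    omega
  obtain ⟨x, hadj', q, hq⟩ := SimpleGraph.Walk.not_nil_iff.mp hpnil
  have hf2p : s(u, x) ∈ p.edges := by
    have : s(u, x) ∈ p.reverse.edges := by rw [hq]; simp
    rwa [SimpleGraph.Walk.edges_reverse, List.mem_reverse] at this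
  have hnd : ((SimpleGraph.Walk.cons hadj p).edges).Nodup :=
    hd.isCircuit.isTrail.edges_nodup
  rw [SimpleGraph.Walk.edges_cons, List.nodup_cons] at hnd
  have hne12 : s(u, b) ≠ s(u, x) := fun h => hnd.1 (h ▸ hf2p)
  -- both edges are in the cycle
  have hm1 : s(u, b) ∈ c.edges := (hrot _).mp (by simp)
  have hm2 : s(u, x) ∈ c.edges := (hrot _).mp (by simp [hf2p])
  have hG1 : s(u, b) ∈ G.edgeSet := (hsub _ hm1).1
  have hG2 : s(u, x) ∈ G.edgeSet := (hsub _ hm2).1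
  -- weight comparisons
  have hle1 : w (e u) ≤ w s(u, b) := (he u).2.2 _ hG1 (Sym2.mem_mk_left u b)
  have hle2 : w (e u) ≤ w s(u, x) := (he u).2.2 _ hG2 (Sym2.mem_mk_left u x)
  have hge1 : w s(u, b) ≤ w (e u) := hfmax _ (List.mem_toFinset.mpr hm1)
  have hge2 : w s(u, x) ≤ w (e u) := hfmax _ (List.mem_toFinset.mpr hm2)
  exact hne12 (hw hG1 hG2 (by linarith))
end
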